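/- The block order is finer than the subword order: for all words u, v over a priority alphabet, u block-smaller-than v implies u is a subword of v. -/

import Mathlib

/-- Glue together a decomposition into blocks and separator letters:
`glue [(u₀,x₀),…,(u_{n-1},x_{n-1})] u_n = u₀x₀u₁x₁⋯x_{n-1}u_n`. -/
def glue {α : Type*} (ps : List (List α × α)) (last : List α) : List α :=
  (ps.map (fun p => p.1 ++ [p.2])).flatten ++ last

/-- The `i`-th block of a decomposition (`last` for the final index). -/
def blockAt {α : Type*} (ps : List (List α × α)) (last : List α) (i : ℕ) :
    List α :=
  if h : i < ps.length then (ps.get ⟨i, h⟩).1 else last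

/-- The blockSegment `v_i y_i v_{i+1} ⋯ y_{j-1} v_j` of a decomposition. -/
def blockSegment {α : Type*} (ps : List (List α × α)) (last : List α) (i j : ℕ) :
    List α :=
  glue ((ps.take j).drop i) (blockAt ps last j)

/-- The block order at priority level `p`: at level `0` (a single priority) it
is the subword order; at level `p+1`, either both words consist solely of
letters of priority `p+1` and are related by the subword order, or both words
are split at their priority-`p+1` letters into sub-blocks of lower priority and
there is a strictly increasing witness block map `φ` sending the first block to
the first and the last block to the last, such that blocks embed recursively in
the block order and each separator letter embeds as a subword into the
corresponding blockSegment of the larger word. -/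
def BlockLE {α : Type*} (prio : α → ℕ) : ℕ → List α → List α → Prop
  | 0, u, v => u.Sublist v
  | (p+1), u, v =>
      ((∀ a ∈ u, prio a = p + 1) ∧ (∀ a ∈ v, prio a = p + 1) ∧ u.Sublist v) ∨
      ∃ (us : List (List α × α)) (ulast : List α)
        (vs : List (List α × α)) (vlast : List α) (φ : ℕ → ℕ),
        u = glue us ulast ∧ v = glue vs vlast ∧
        (∀ q ∈ us, prio q.2 = p + 1 ∧ ∀ a ∈ q.1, prio a ≤ p) ∧
        (∀ a ∈ ulast, prio a ≤ p) ∧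
        (∀ q ∈ vs, prio q.2 = p + 1 ∧ ∀ a ∈ q.1, prio a ≤ p) ∧
        (∀ a ∈ vlast, prio a ≤ p) ∧
        (∀ i j, i < j → j ≤ us.length → φ i < φ j) ∧
        φ 0 = 0 ∧ φ us.length = vs.length ∧
        (∀ i ≤ us.length,
          BlockLE prio p (blockAt us ulast i) (blockAt vs vlast (φ i))) ∧
        (∀ i (h : i < us.length),
          [(us.get ⟨i, h⟩).2].Sublist (blockSegment vs vlast (φ i) (φ (i + 1))))

/-- The middle part `v_i y_i v_{i+1} ⋯ v_{j-1} y_{j-1}` of a decomposition. -/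
def mid {α : Type*} (ps : List (List α × α)) (i j : ℕ) : List α :=
  (((ps.take j).drop i).map (fun p => p.1 ++ [p.2])).flatten

lemma mid_append {α : Type*} (ps : List (List α × α)) {a b c : ℕ}
    (hab : a ≤ b) (hbc : b ≤ c) : mid ps a c = mid ps a b ++ mid ps b c := by
  unfold mid
  rw [← List.flatten_append, ← List.map_append]
  congr 1
  rw [List.drop_take, List.drop_take, List.drop_take,
    show c - a = (b - a) + (c - b) by omega, List.take_add, List.drop_drop,
    show a + (b - a) = b by omega]

lemma blockSegment_eq_mid {α : Type*} (ps : List (List α × α)) (last : List α)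
    (i j : ℕ) : blockSegment ps last i j = mid ps i j ++ blockAt ps last j := rfl

lemma mid_self {α : Type*} (ps : List (List α × α)) (i : ℕ) : mid ps i i = [] := by
  simp [mid, List.drop_take]

lemma blockSegment_self {α : Type*} (ps : List (List α × α)) (last : List α)
    (i : ℕ) : blockSegment ps last i i = blockAt ps last i := by
  rw [blockSegment_eq_mid, mid_self, List.nil_append]

lemma blockSegment_split {α : Type*} (ps : List (List α × α)) (last : List α)
    {a b c : ℕ} (hab : a ≤ b) (hbc : b ≤ c) :
    blockSegment ps last a c = mid ps a b ++ blockSegment ps last b c := by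
  rw [blockSegment_eq_mid, blockSegment_eq_mid, mid_append ps hab hbc,
    List.append_assoc]

lemma mid_single {α : Type*} (ps : List (List α × α)) {i : ℕ}
    (h : i < ps.length) :
    mid ps i (i + 1) = (ps.get ⟨i, h⟩).1 ++ [(ps.get ⟨i, h⟩).2] := by
  unfold mid
  rw [List.drop_take, show i + 1 - i = 1 by omega,
    List.drop_eq_getElem_cons h, List.take_succ_cons, List.take_zero]
  simp

lemma blockSegment_full {α : Type*} (ps : List (List α × α)) (last : List α) :
    blockSegment ps last 0 ps.length = glue ps last := by
  simp [blockSegment, blockAt]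

lemma blockLE_sublist_aux {α : Type*} (prio : α → ℕ) :
    ∀ (p : ℕ) (u v : List α), BlockLE prio p u v → u.Sublist v := by
  intro p
  induction p with
  | zero => intro u v h; exact h
  | succ p ih =>
    intro u v h
    rcases h with ⟨-, -, hs⟩ | ⟨us, ulast, vs, vlast, φ, hu, hv, hus, hulast,
      hvs, hvlast, hmono, hφ0, hφn, hblocks, hsep⟩
    · exact hs
    subst hu hv
    have key : ∀ k i, i ≤ us.length → us.length - i = k →
        (blockSegment us ulast i us.length).Sublist
          (blockSegment vs vlast (φ i) vs.length) := by
      intro k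
      induction k with
      | zero =>
        intro i hi hk
        have hieq : i = us.length := by omega
        subst hieq
        rw [hφn, blockSegment_self, blockSegment_self]
        have h1 := hblocks us.length le_rfl
        rw [hφn] at h1
        exact ih _ _ h1
      | succ k ihk =>
        intro i hi hk
        have hilt : i < us.length := by omega
        have h1 : φ i < φ (i + 1) := hmono i (i + 1) (by omega) (by omega)
        have h2 : φ (i + 1) ≤ vs.length := by
          rcases eq_or_lt_of_le (show i + 1 ≤ us.length by omega) with he | hl
          · rw [he, hφn]
          · have := hmono (i + 1) us.length hl le_rfl
            omega
        have hφiv : φ i < vs.length := lt_of_lt_of_le h1 h2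
        rw [blockSegment_split us ulast (show i ≤ i + 1 by omega)
          (show i + 1 ≤ us.length by omega),
          blockSegment_split vs vlast (le_of_lt h1) h2,
          mid_single us hilt,
          mid_append vs (show φ i ≤ φ i + 1 by omega) h1,
          mid_single vs hφiv]
        -- block embedding
        have hblock : (us.get ⟨i, hilt⟩).1.Sublist (vs.get ⟨φ i, hφiv⟩).1 := by
          have h3 := hblocks i (le_of_lt hilt)
          rw [blockAt, dif_pos hilt, blockAt, dif_pos hφiv] at h3
          exact ih _ _ h3
        -- separator embedding
        have hxp : prio (us.get ⟨i, hilt⟩).2 = p + 1 :=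
          (hus _ (List.get_mem us ⟨i, hilt⟩)).1
        have hxmem : (us.get ⟨i, hilt⟩).2 ∈
            [(vs.get ⟨φ i, hφiv⟩).2] ++ mid vs (φ i + 1) (φ (i + 1)) := by
          have h4 := hsep i hilt
          rw [blockSegment_split vs vlast (le_of_lt h1) le_rfl,
            blockSegment_self, mid_append vs (show φ i ≤ φ i + 1 by omega) h1,
            mid_single vs hφiv, List.singleton_sublist] at h4
          simp only [List.mem_append, List.mem_singleton,
            List.singleton_append, List.mem_cons] at h4 ⊢
          rcases h4 with ((h4 | h4) | h4) | h4
          · exact absurd ((hvs _ (List.get_mem vs ⟨_, hφiv⟩)).2 _ h4) (by omega)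
          · exact Or.inl (by simpa using h4)
          · exact Or.inr h4
          · exfalso
            rw [blockAt] at h4
            split_ifs at h4 with h5
            · exact absurd ((hvs _ (List.get_mem vs ⟨_, h5⟩)).2 _ h4) (by omega)
            · exact absurd (hvlast _ h4) (by omega)
        have hxsub : [(us.get ⟨i, hilt⟩).2].Sublist
            ([(vs.get ⟨φ i, hφiv⟩).2] ++ mid vs (φ i + 1) (φ (i + 1))) :=
          List.singleton_sublist.mpr hxmem
        have hrest := ihk (i + 1) (by omega) (by omega)
        refine List.Sublist.append ?_ hrest
        rw [List.append_assoc]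
        exact hblock.append hxsub
    have := key (us.length) 0 (Nat.zero_le _) (by omega)
    rw [blockSegment_full, hφ0, blockSegment_full] at this
    exact this

/-- The block order is finer than the subword order. -/
theorem blockLE_sublist {α : Type*} (prio : α → ℕ) (d : ℕ)
    (hd : ∀ a : α, prio a ≤ d) (u v : List α)
    (h : BlockLE prio d u v) : u.Sublist v := blockLE_sublist_aux prio d u v h
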